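/- arXiv:2405.19268 — 8 statements merged into one kernel-verified Lean document; each statement's English description precedes it below -/
import Mathlib

section
/- Let n ≥ 1 and let D be a digraph on Fin n that contains no loop (i.e., D i i fails for every i). Then D has sign symmetric P_{0,1}^+-completion. -/
namespace SSP

/-- The principal minor of `B` on the index set `S`: the determinant of the
S×S principal submatrix of `B`. -/
def pMinor {n : ℕ} (B : Matrix (Fin n) (Fin n) ℝ) (S : Finset (Fin n)) : ℝ :=
  (B.submatrix (fun i : {x // x ∈ S} => (i : Fin n))
               (fun j : {x // x ∈ S} => (j : Fin n))).det

/-- `B` is sign symmetric: for all `i ≠ j`, twin entries have a positive product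
or are both zero. -/
def SignSym {n : ℕ} (B : Matrix (Fin n) (Fin n) ℝ) : Prop :=
  ∀ i j : Fin n, i ≠ j → (0 < B i j * B j i ∨ (B i j = 0 ∧ B j i = 0))

/-- `B` is a P₀-matrix: every principal minor is nonnegative. -/
def IsP0 {n : ℕ} (B : Matrix (Fin n) (Fin n) ℝ) : Prop :=
  ∀ S : Finset (Fin n), S.Nonempty → 0 ≤ pMinor B S

/-- `B` is a P-matrix: every principal minor is positive. -/
def IsP {n : ℕ} (B : Matrix (Fin n) (Fin n) ℝ) : Prop :=
  ∀ S : Finset (Fin n), S.Nonempty → 0 < pMinor B S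

/-- `B` is a P₀⁺-matrix: for every `k ∈ {1,…,n}`, every size-`k` principal
minor is nonnegative and at least one size-`k` principal minor is positive. -/
def IsP0plus {n : ℕ} (B : Matrix (Fin n) (Fin n) ℝ) : Prop :=
  ∀ k : ℕ, 1 ≤ k → k ≤ n →
    ((∀ S : Finset (Fin n), S.card = k → 0 ≤ pMinor B S) ∧
     (∃ S : Finset (Fin n), S.card = k ∧ 0 < pMinor B S))

/-- `B` is a P₀₁⁺-matrix: a P₀⁺-matrix with positive diagonal entries. -/
def IsP01plus {n : ℕ} (B : Matrix (Fin n) (Fin n) ℝ) : Prop :=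
  IsP0plus B ∧ ∀ i : Fin n, 0 < B i i

/-- `B` is a P₀₁-matrix: a P₀-matrix with positive diagonal entries. -/
def IsP01 {n : ℕ} (B : Matrix (Fin n) (Fin n) ℝ) : Prop :=
  IsP0 B ∧ ∀ i : Fin n, 0 < B i i

/-- Every specified diagonal entry of the partial matrix `A` (specifying the
digraph `D`) is positive. -/
def PartialDiagPos {n : ℕ} (D : Fin n → Fin n → Prop)
    (A : Matrix (Fin n) (Fin n) ℝ) : Prop :=
  ∀ i : Fin n, D i i → 0 < A i i

/-- Fully specified twin entries of the partial matrix `A` have positive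
product or are both zero. -/
def PartialTwin {n : ℕ} (D : Fin n → Fin n → Prop)
    (A : Matrix (Fin n) (Fin n) ℝ) : Prop :=
  ∀ i j : Fin n, i ≠ j → D i j → D j i →
    (0 < A i j * A j i ∨ (A i j = 0 ∧ A j i = 0))

/-- Every fully specified principal minor of the partial matrix `A` is
nonnegative. -/
def PartialMinorsNonneg {n : ℕ} (D : Fin n → Fin n → Prop)
    (A : Matrix (Fin n) (Fin n) ℝ) : Prop :=
  ∀ S : Finset (Fin n), S.Nonempty → (∀ i ∈ S, ∀ j ∈ S, D i j) → 0 ≤ pMinor A S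

/-- Every fully specified principal minor of the partial matrix `A` is
positive. -/
def PartialMinorsPos {n : ℕ} (D : Fin n → Fin n → Prop)
    (A : Matrix (Fin n) (Fin n) ℝ) : Prop :=
  ∀ S : Finset (Fin n), S.Nonempty → (∀ i ∈ S, ∀ j ∈ S, D i j) → 0 < pMinor A S

/-- `B` is a completion of the partial matrix `A` specifying `D`. -/
def Completes {n : ℕ} (D : Fin n → Fin n → Prop)
    (A B : Matrix (Fin n) (Fin n) ℝ) : Prop :=
  ∀ i j : Fin n, D i j → B i j = A i j

/-- `A` is a partial sign symmetric P₀₁⁺-matrix specifying `D`. -/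
def PartSSP01plus {n : ℕ} (D : Fin n → Fin n → Prop)
    (A : Matrix (Fin n) (Fin n) ℝ) : Prop :=
  PartialDiagPos D A ∧ PartialTwin D A ∧ PartialMinorsNonneg D A

/-- `A` is a partial sign symmetric P₀₁-matrix specifying `D`. -/
def PartSSP01 {n : ℕ} (D : Fin n → Fin n → Prop)
    (A : Matrix (Fin n) (Fin n) ℝ) : Prop :=
  PartialDiagPos D A ∧ PartialTwin D A ∧ PartialMinorsNonneg D A

/-- `A` is a partial sign symmetric P₀-matrix specifying `D`. -/
def PartSSP0 {n : ℕ} (D : Fin n → Fin n → Prop)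
    (A : Matrix (Fin n) (Fin n) ℝ) : Prop :=
  PartialTwin D A ∧ PartialMinorsNonneg D A

/-- `A` is a partial sign symmetric P₀⁺-matrix specifying `D`. -/
def PartSSP0plus {n : ℕ} (D : Fin n → Fin n → Prop)
    (A : Matrix (Fin n) (Fin n) ℝ) : Prop :=
  PartialTwin D A ∧ PartialMinorsNonneg D A

/-- `A` is a partial sign symmetric P-matrix specifying `D`. -/
def PartSSP {n : ℕ} (D : Fin n → Fin n → Prop)
    (A : Matrix (Fin n) (Fin n) ℝ) : Prop :=
  PartialTwin D A ∧ PartialMinorsPos D A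

/-- `D` has sign symmetric P₀₁⁺-completion. -/
def HasSSP01plusCompletion {n : ℕ} (D : Fin n → Fin n → Prop) : Prop :=
  ∀ A : Matrix (Fin n) (Fin n) ℝ, PartSSP01plus D A →
    ∃ B : Matrix (Fin n) (Fin n) ℝ, Completes D A B ∧ SignSym B ∧ IsP01plus B

/-- `D` has sign symmetric P₀₁-completion. -/
def HasSSP01Completion {n : ℕ} (D : Fin n → Fin n → Prop) : Prop :=
  ∀ A : Matrix (Fin n) (Fin n) ℝ, PartSSP01 D A →
    ∃ B : Matrix (Fin n) (Fin n) ℝ, Completes D A B ∧ SignSym B ∧ IsP01 B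

/-- `D` has sign symmetric P₀-completion. -/
def HasSSP0Completion {n : ℕ} (D : Fin n → Fin n → Prop) : Prop :=
  ∀ A : Matrix (Fin n) (Fin n) ℝ, PartSSP0 D A →
    ∃ B : Matrix (Fin n) (Fin n) ℝ, Completes D A B ∧ SignSym B ∧ IsP0 B

/-- `D` has sign symmetric P₀⁺-completion. -/
def HasSSP0plusCompletion {n : ℕ} (D : Fin n → Fin n → Prop) : Prop :=
  ∀ A : Matrix (Fin n) (Fin n) ℝ, PartSSP0plus D A →
    ∃ B : Matrix (Fin n) (Fin n) ℝ, Completes D A B ∧ SignSym B ∧ IsP0plus B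

/-- `D` has sign symmetric P-completion. -/
def HasSSPCompletion {n : ℕ} (D : Fin n → Fin n → Prop) : Prop :=
  ∀ A : Matrix (Fin n) (Fin n) ℝ, PartSSP D A →
    ∃ B : Matrix (Fin n) (Fin n) ℝ, Completes D A B ∧ SignSym B ∧ IsP B

open Polynomial Filter

lemma eval_charpoly_det {m : Type*} [Fintype m] [DecidableEq m] (M : Matrix m m ℝ) (r : ℝ) :
    Polynomial.eval r M.charpoly = (r • (1 : Matrix m m ℝ) - M).det := by
  rw [Matrix.charpoly, _root_.eval_det, Matrix.matPolyEquiv_charmatrix]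
  simp [Matrix.scalar_apply, Matrix.smul_one_eq_diagonal]

/-- A digraph with no loop has sign symmetric P₀₁⁺-completion. -/
theorem no_loop_hasSSP01plusCompletion {n : ℕ} (hn : 1 ≤ n)
    (D : Fin n → Fin n → Prop) (hloop : ∀ i : Fin n, ¬ D i i) :
    HasSSP01plusCompletion D := by
  classical
  intro A hA
  obtain ⟨_, hTwin, _⟩ := hA
  set E : Matrix (Fin n) (Fin n) ℝ :=
    fun i j => if D i j then A i j else if D j i then A j i else 0 with hE
  -- submatrix of E on S
  let ES : (S : Finset (Fin n)) → Matrix {x // x ∈ S} {x // x ∈ S} ℝ := fun S =>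
    E.submatrix (fun i : {x // x ∈ S} => (i : Fin n))
                (fun j : {x // x ∈ S} => (j : Fin n))
  have hminor : ∀ (c : ℝ) (S : Finset (Fin n)),
      pMinor (c • (1 : Matrix (Fin n) (Fin n) ℝ) + E) S
        = Polynomial.eval c (Matrix.charpoly (-(ES S))) := by
    intro c S
    rw [eval_charpoly_det, sub_neg_eq_add, pMinor]
    congr 1
    ext i j
    simp only [Matrix.submatrix_apply, Matrix.add_apply, Matrix.smul_apply,
      Matrix.one_apply, smul_eq_mul, ES, Subtype.ext_iff]
  have hev : ∀ S : Finset (Fin n),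
      ∀ᶠ c : ℝ in atTop, S.Nonempty →
        0 < Polynomial.eval c (Matrix.charpoly (-(ES S))) := by
    intro S
    by_cases hS : S.Nonempty
    · have hcard : (0 : ℕ) < Fintype.card {x // x ∈ S} := by
        rw [Fintype.card_coe]; exact Finset.card_pos.2 hS
      have hdeg : 0 < (Matrix.charpoly (-(ES S))).degree := by
        rw [Matrix.charpoly_degree_eq_dim]
        exact_mod_cast hcard
      have hlc : 0 ≤ (Matrix.charpoly (-(ES S))).leadingCoeff := by
        rw [(Matrix.charpoly_monic _).leadingCoeff]; exact zero_le_one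
      have := (Polynomial.tendsto_atTop_of_leadingCoeff_nonneg _ hdeg
        hlc).eventually_gt_atTop 0
      exact this.mono fun c hc _ => hc
    · exact Filter.Eventually.of_forall fun c h => absurd h hS
  have hall : ∀ᶠ c : ℝ in atTop, (0 < c) ∧ ∀ S : Finset (Fin n), S.Nonempty →
      0 < Polynomial.eval c (Matrix.charpoly (-(ES S))) :=
    (eventually_gt_atTop 0).and (Filter.eventually_all.2 hev)
  obtain ⟨c, hc0, hcS⟩ := hall.exists
  refine ⟨c • (1 : Matrix (Fin n) (Fin n) ℝ) + E, ?_, ?_, ?_, ?_⟩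
  · -- Completes
    intro i j hD
    have hij : i ≠ j := by rintro rfl; exact hloop i hD
    rw [Matrix.add_apply, Matrix.smul_apply, Matrix.one_apply_ne hij]; simp [hE, hD]
  · -- SignSym
    intro i j hij
    have h1 : (c • (1 : Matrix (Fin n) (Fin n) ℝ) + E) i j = E i j := by
      simp [Matrix.add_apply, Matrix.smul_apply, Matrix.one_apply_ne hij]
    have h2 : (c • (1 : Matrix (Fin n) (Fin n) ℝ) + E) j i = E j i := by
      simp [Matrix.add_apply, Matrix.smul_apply, Matrix.one_apply_ne hij.symm]
    rw [h1, h2]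
    by_cases hij1 : D i j <;> by_cases hij2 : D j i
    · have := hTwin i j hij hij1 hij2
      simpa [hE, hij1, hij2] using this
    · have hEij : E i j = A i j := by simp [hE, hij1]
      have hEji : E j i = A i j := by simp [hE, hij2, hij1]
      rw [hEij, hEji]
      rcases eq_or_ne (A i j) 0 with h | h
      · exact Or.inr ⟨h, h⟩
      · exact Or.inl (mul_self_pos.2 h)
    · have hEij : E i j = A j i := by simp [hE, hij1, hij2]
      have hEji : E j i = A j i := by simp [hE, hij2]
      rw [hEij, hEji]
      rcases eq_or_ne (A j i) 0 with h | h
      · exact Or.inr ⟨h, h⟩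
      · exact Or.inl (mul_self_pos.2 h)
    · exact Or.inr ⟨by simp [hE, hij1, hij2], by simp [hE, hij2, hij1]⟩
  · -- IsP0plus
    have hP : ∀ S : Finset (Fin n), S.Nonempty →
        0 < pMinor (c • (1 : Matrix (Fin n) (Fin n) ℝ) + E) S := by
      intro S hS
      rw [hminor]
      exact hcS S hS
    intro k hk1 hkn
    constructor
    · intro S hScard
      exact le_of_lt (hP S (Finset.card_pos.1 (hScard ▸ hk1)))
    · obtain ⟨S, -, hScard⟩ := Finset.exists_subset_card_eq
        (s := (Finset.univ : Finset (Fin n))) (n := k) (by simpa using hkn)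
      exact ⟨S, hScard, hP S (Finset.card_pos.1 (hScard ▸ hk1))⟩
  · -- diag positive
    intro i
    have : E i i = 0 := by simp [hE, hloop i]
    simp [Matrix.add_apply, Matrix.smul_apply, Matrix.one_apply_eq, this, hc0]


end SSP
end

section
/- Every digraph D on Fin n that has sign symmetric P_0^+-completion also has sign symmetric P_{0,1}-completion. -/
namespace SSP

open Matrix in
/-- If the rows of a matrix indexed by `s` are replaced by the corresponding standard basis
vectors, the determinant is the principal minor on the complement. -/
lemma det_piecewise_single {m : Type*} [Fintype m] [DecidableEq m]
    (M : Matrix m m ℝ) (s : Finset m) :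
    (Matrix.of (s.piecewise (fun i => Pi.single i (1 : ℝ)) (fun i => M i))).det
      = (M.submatrix (fun i : {x // x ∉ s} => (i : m))
          (fun j : {x // x ∉ s} => (j : m))).det := by
  classical
  let e : {x // x ∈ s} ⊕ {x // x ∉ s} ≃ m := Equiv.sumCompl (· ∈ s)
  rw [← Matrix.det_submatrix_equiv_self e]
  have hb : (Matrix.of (s.piecewise (fun i => Pi.single i (1 : ℝ)) (fun i => M i))).submatrix e e
      = Matrix.fromBlocks 1 0
          (Matrix.of fun (i : {x // x ∉ s}) (j : {x // x ∈ s}) => M (i : m) (j : m))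
          (M.submatrix (fun i : {x // x ∉ s} => (i : m))
            (fun j : {x // x ∉ s} => (j : m))) := by
    ext i j
    cases i with
    | inl i =>
      cases j with
      | inl j =>
        simp only [e, Matrix.submatrix_apply, Matrix.of_apply, Equiv.sumCompl_apply_inl,
          Matrix.fromBlocks_apply₁₁, Finset.piecewise_eq_of_mem _ _ _ i.2,
          Pi.single_apply, Matrix.one_apply, Subtype.ext_iff, eq_comm]
      | inr j =>
        have hij : (j : m) ≠ (i : m) := fun hc => j.2 (hc ▸ i.2)
        simp [e, Matrix.submatrix_apply, Finset.piecewise_eq_of_mem _ _ _ i.2,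
          Pi.single_apply, hij]
    | inr i =>
      cases j with
      | inl j =>
        simp [e, Matrix.submatrix_apply, Finset.piecewise_eq_of_notMem _ _ _ i.2]
      | inr j =>
        simp [e, Matrix.submatrix_apply, Finset.piecewise_eq_of_notMem _ _ _ i.2]
  rw [hb, Matrix.det_fromBlocks_zero₁₂, Matrix.det_one, one_mul]

open Matrix in
/-- Adding a nonnegative diagonal matrix to a matrix all of whose principal minors are
nonnegative keeps the determinant nonnegative. -/
lemma det_add_diagonal_nonneg {m : Type*} [Fintype m] [DecidableEq m]
    (M : Matrix m m ℝ) (d : m → ℝ) (hd : ∀ i, 0 ≤ d i)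
    (hM : ∀ s : Finset m, 0 ≤ (M.submatrix (fun i : {x // x ∈ s} => (i : m))
        (fun j : {x // x ∈ s} => (j : m))).det) :
    0 ≤ (M + Matrix.diagonal d).det := by
  classical
  have hadd : (M + Matrix.diagonal d).det
      = ∑ s : Finset m,
          (Matrix.detRowAlternating : (m → ℝ) [⋀^m]→ₗ[ℝ] ℝ).toMultilinearMap
            (s.piecewise (fun i => Matrix.diagonal d i) (fun i => M i)) := by
    have h0 := MultilinearMap.map_add_univ
      (Matrix.detRowAlternating : (m → ℝ) [⋀^m]→ₗ[ℝ] ℝ).toMultilinearMap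
      (fun i => Matrix.diagonal d i) (fun i => M i)
    rw [add_comm M]
    exact h0
  rw [hadd]
  refine Finset.sum_nonneg fun s _ => ?_
  set P : m → m → ℝ := s.piecewise (fun i => Pi.single i (1 : ℝ)) (fun i => M i) with hP
  have hpw : s.piecewise (fun i => Matrix.diagonal d i) (fun i => M i)
      = s.piecewise (fun i => d i • P i) P := by
    funext i
    by_cases hi : i ∈ s
    · rw [Finset.piecewise_eq_of_mem _ _ _ hi, Finset.piecewise_eq_of_mem _ _ _ hi, hP,
        Finset.piecewise_eq_of_mem _ _ _ hi]
      funext j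
      simp [Matrix.diagonal_apply, Pi.single_apply, eq_comm]
    · rw [Finset.piecewise_eq_of_notMem _ _ _ hi, Finset.piecewise_eq_of_notMem _ _ _ hi, hP,
        Finset.piecewise_eq_of_notMem _ _ _ hi]
  rw [hpw, MultilinearMap.map_piecewise_smul]
  have hdet : (Matrix.detRowAlternating : (m → ℝ) [⋀^m]→ₗ[ℝ] ℝ).toMultilinearMap P
      = (Matrix.of P).det := rfl
  rw [hdet, hP, det_piecewise_single M s]
  have hcompl : 0 ≤ (M.submatrix (fun i : {x // x ∉ s} => (i : m))
      (fun j : {x // x ∉ s} => (j : m))).det := by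
    have h1 := hM sᶜ
    let e : {x // x ∈ sᶜ} ≃ {x // x ∉ s} :=
      Equiv.subtypeEquivRight (p := fun x => x ∈ sᶜ) (q := fun x => x ∉ s)
        (fun x => Finset.mem_compl)
    have h2 : ((M.submatrix (fun i : {x // x ∉ s} => (i : m))
        (fun j : {x // x ∉ s} => (j : m))).submatrix e e).det
        = (M.submatrix (fun i : {x // x ∉ s} => (i : m))
            (fun j : {x // x ∉ s} => (j : m))).det :=
      Matrix.det_submatrix_equiv_self e _
    rw [← h2]
    exact h1
  have hprod : 0 ≤ ∏ i ∈ s, d i := Finset.prod_nonneg fun i _ => hd i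
  exact smul_nonneg hprod hcompl

/-- Adding a nonnegative diagonal to a P₀-style matrix keeps all principal minors
nonnegative. -/
lemma pMinor_add_diagonal_nonneg {n : ℕ} (B : Matrix (Fin n) (Fin n) ℝ)
    (d : Fin n → ℝ) (hd : ∀ i, 0 ≤ d i)
    (hB : ∀ S : Finset (Fin n), S.Nonempty → 0 ≤ pMinor B S)
    (S : Finset (Fin n)) : 0 ≤ pMinor (B + Matrix.diagonal d) S := by
  classical
  unfold pMinor
  have hsub : (B + Matrix.diagonal d).submatrix
      (fun i : {x // x ∈ S} => (i : Fin n)) (fun j : {x // x ∈ S} => (j : Fin n))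
      = B.submatrix (fun i : {x // x ∈ S} => (i : Fin n)) (fun j : {x // x ∈ S} => (j : Fin n))
        + Matrix.diagonal (fun i : {x // x ∈ S} => d (i : Fin n)) := by
    ext i j
    by_cases hij : i = j
    · subst hij
      simp [Matrix.add_apply, Matrix.diagonal_apply_eq]
    · have hne : (i : Fin n) ≠ (j : Fin n) := fun hc => hij (Subtype.ext hc)
      simp [Matrix.add_apply, Matrix.diagonal_apply_ne _ hne, Matrix.diagonal_apply_ne _ hij]
  rw [hsub]
  refine det_add_diagonal_nonneg _ _ (fun i => hd _) ?_
  intro s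
  rcases s.eq_empty_or_nonempty with rfl | hs
  · haveI : IsEmpty {x // x ∈ (∅ : Finset {x // x ∈ S})} :=
      ⟨fun x => (Finset.notMem_empty _ x.2)⟩
    simp [Matrix.det_isEmpty]
  · set T : Finset (Fin n) := s.map ⟨Subtype.val, Subtype.val_injective⟩ with hT
    have hTne : T.Nonempty := Finset.Nonempty.map hs
    have hBT := hB T hTne
    let e : {x // x ∈ s} ≃ {y // y ∈ T} :=
      { toFun := fun x => ⟨(x : {x // x ∈ S}).1, Finset.mem_map_of_mem _ x.2⟩
        invFun := fun y => ⟨⟨y.1, by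
            obtain ⟨x, hx, hxy⟩ := Finset.mem_map.mp y.2
            exact hxy ▸ x.2⟩, by
            obtain ⟨x, hx, hxy⟩ := Finset.mem_map.mp y.2
            have hx' : x = ⟨y.1, hxy ▸ x.2⟩ := Subtype.ext hxy
            exact hx' ▸ hx⟩
        left_inv := fun x => Subtype.ext (Subtype.ext rfl)
        right_inv := fun y => Subtype.ext rfl }
    have h2 : ((B.submatrix (fun i : {y // y ∈ T} => (i : Fin n))
        (fun j : {y // y ∈ T} => (j : Fin n))).submatrix e e).det
        = pMinor B T := Matrix.det_submatrix_equiv_self e _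
    have h3 : ((B.submatrix (fun i : {y // y ∈ T} => (i : Fin n))
        (fun j : {y // y ∈ T} => (j : Fin n))).submatrix e e)
        = ((B.submatrix (fun i : {x // x ∈ S} => (i : Fin n))
            (fun j : {x // x ∈ S} => (j : Fin n))).submatrix
          (fun i : {x // x ∈ s} => ((i : {x // x ∈ S}) : {x // x ∈ S}))
          (fun j : {x // x ∈ s} => ((j : {x // x ∈ S}) : {x // x ∈ S}))) := rfl
    rw [← h3, h2]
    exact hBT

/-- Any digraph that has sign symmetric P₀⁺-completion also has sign symmetric
P₀₁-completion. -/
theorem hasSSP0plusCompletion_imp_hasSSP01Completion {n : ℕ}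
    (D : Fin n → Fin n → Prop) (h : HasSSP0plusCompletion D) :
    HasSSP01Completion D := by
  classical
  intro A hA
  obtain ⟨hdiag, htwin, hminor⟩ := hA
  obtain ⟨B, hBc, hBs, hB0p⟩ := h A ⟨htwin, hminor⟩
  have hBP0 : ∀ S : Finset (Fin n), S.Nonempty → 0 ≤ pMinor B S := by
    intro S hS
    have hk1 : 1 ≤ S.card := Finset.Nonempty.card_pos hS
    have hkn : S.card ≤ n := by
      simpa using Finset.card_le_univ S
    exact (hB0p S.card hk1 hkn).1 S rfl
  set d : Fin n → ℝ := fun i => if D i i then 0 else 1 with hd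
  have hd0 : ∀ i, 0 ≤ d i := by
    intro i; by_cases hi : D i i <;> simp [hd, hi]
  refine ⟨B + Matrix.diagonal d, ?_, ?_, ?_, ?_⟩
  · intro i j hij
    rcases eq_or_ne i j with rfl | hne
    · rw [Matrix.add_apply, Matrix.diagonal_apply_eq]
      simp only [hd, if_pos hij, add_zero]
      exact hBc i i hij
    · rw [Matrix.add_apply, Matrix.diagonal_apply_ne _ hne, add_zero]
      exact hBc i j hij
  · intro i j hne
    have := hBs i j hne
    rwa [Matrix.add_apply, Matrix.add_apply, Matrix.diagonal_apply_ne _ hne,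
      Matrix.diagonal_apply_ne _ hne.symm, add_zero, add_zero]
  · intro S hS
    exact pMinor_add_diagonal_nonneg B d hd0 hBP0 S
  · intro i
    have hBii : 0 ≤ B i i := by
      haveI : Unique {x // x ∈ ({i} : Finset (Fin n))} :=
        ⟨⟨⟨i, Finset.mem_singleton_self i⟩⟩,
          fun x => Subtype.ext (Finset.mem_singleton.mp x.2)⟩
      have h1 := (hB0p 1 le_rfl i.pos).1 {i} (Finset.card_singleton i)
      have h2 : pMinor B {i} = B i i := by
        rw [pMinor, Matrix.det_unique, Matrix.submatrix_apply]
        have hdef : ((default : {x // x ∈ ({i} : Finset (Fin n))}) : Fin n) = i :=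
          Finset.mem_singleton.mp (default : {x // x ∈ ({i} : Finset (Fin n))}).2
        rw [hdef]
      rwa [h2] at h1
    rw [Matrix.add_apply, Matrix.diagonal_apply_eq]
    by_cases hDi : D i i
    · simp only [hd, if_pos hDi, add_zero]
      rw [hBc i i hDi]
      exact hdiag i hDi
    · simp only [hd, if_neg hDi]
      linarith

end SSP
end

section
/- Every digraph D on Fin n that has sign symmetric P_0^+-completion also has sign symmetric P-completion. -/
open Matrix Filter Topology

section DetLemmas

variable {ι : Type*} [Fintype ι] [DecidableEq ι]

lemma SSPaux_det_piecewise (M : Matrix ι ι ℝ) (ε : ℝ) (s : Finset ι) :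
    Matrix.det (Matrix.of (s.piecewise (M : ι → ι → ℝ) (ε • (1 : Matrix ι ι ℝ) : ι → ι → ℝ)))
      = ε ^ (sᶜ.card) *
        (M.submatrix (fun i : {x // x ∈ s} => (i : ι)) (fun j : {x // x ∈ s} => (j : ι))).det := by
  set N : Matrix ι ι ℝ :=
    Matrix.of (s.piecewise (M : ι → ι → ℝ) (ε • (1 : Matrix ι ι ℝ) : ι → ι → ℝ)) with hN
  have h0 : ∀ i, ¬ i ∈ s → ∀ j, j ∈ s → N i j = 0 := by
    intro i hi j hj
    have hij : i ≠ j := fun h => hi (h ▸ hj)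
    simp [hN, Finset.piecewise, hi, Matrix.one_apply_ne hij]
  rw [Matrix.twoBlockTriangular_det N (fun i => i ∈ s) h0]
  have h1 : N.toSquareBlockProp (fun i => i ∈ s)
      = M.submatrix (fun i : {x // x ∈ s} => (i : ι)) (fun j : {x // x ∈ s} => (j : ι)) := by
    ext i j
    simp [Matrix.toSquareBlockProp, hN, Finset.piecewise, i.2]
  have h2 : N.toSquareBlockProp (fun i => ¬ i ∈ s)
      = ε • (1 : Matrix {i // ¬ i ∈ s} {i // ¬ i ∈ s} ℝ) := by
    ext i j
    by_cases hij : (i : ι) = j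
    · have : i = j := Subtype.ext hij
      subst this
      simp [Matrix.toSquareBlockProp, hN, Finset.piecewise, i.2]
    · have : i ≠ j := fun h => hij (congrArg Subtype.val h)
      simp [Matrix.toSquareBlockProp, hN, Finset.piecewise, i.2, Matrix.one_apply_ne hij,
        Matrix.one_apply_ne this]
  rw [h1, h2, Matrix.det_smul, Matrix.det_one, mul_one]
  have hcard : Fintype.card {i // ¬ i ∈ s} = sᶜ.card := by
    simp [Fintype.card_subtype, Finset.filter_not, Finset.compl_eq_univ_sdiff]
  rw [hcard, mul_comm]
  congr!

lemma SSPaux_det_add_smul_one (M : Matrix ι ι ℝ) (ε : ℝ) :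
    (M + ε • (1 : Matrix ι ι ℝ)).det
      = ∑ s : Finset ι, ε ^ (sᶜ.card) *
          (M.submatrix (fun i : {x // x ∈ s} => (i : ι)) (fun j : {x // x ∈ s} => (j : ι))).det := by
  have h := (Matrix.detRowAlternating (R := ℝ) (n := ι)).toMultilinearMap.map_add_univ
    (M : ι → ι → ℝ) (ε • (1 : Matrix ι ι ℝ) : ι → ι → ℝ)
  calc (M + ε • (1 : Matrix ι ι ℝ)).det
      = ∑ s : Finset ι,
          Matrix.det (Matrix.of (s.piecewise (M : ι → ι → ℝ)
            (ε • (1 : Matrix ι ι ℝ) : ι → ι → ℝ))) := h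
    _ = _ := Finset.sum_congr rfl fun s _ => SSPaux_det_piecewise M ε s

end DetLemmas


namespace SSP

lemma SSPaux_submatrix_det_eq_pMinor {n : ℕ} (B : Matrix (Fin n) (Fin n) ℝ) (S : Finset (Fin n))
    (t : Finset {x // x ∈ S}) :
    ((B.submatrix (fun i : {x // x ∈ S} => (i : Fin n)) fun j : {x // x ∈ S} => (j : Fin n)).submatrix
        (fun i : {x // x ∈ t} => (i : {x // x ∈ S})) fun j : {x // x ∈ t} => (j : {x // x ∈ S})).det
      = pMinor B (t.map ⟨Subtype.val, Subtype.val_injective⟩) := by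
  set T := t.map ⟨Subtype.val, Subtype.val_injective⟩ with hT
  have hf : ∀ x : {x // x ∈ t}, ((x : {x // x ∈ S}) : Fin n) ∈ T := fun x =>
    Finset.mem_map_of_mem _ x.2
  have hbij : Function.Bijective (fun x : {x // x ∈ t} => (⟨x.1.1, hf x⟩ : {y // y ∈ T})) := by
    constructor
    · intro x y hxy
      simp only [Subtype.mk.injEq] at hxy
      exact Subtype.ext (Subtype.ext hxy)
    · rintro ⟨y, hy⟩
      obtain ⟨x, hx, hxy⟩ := Finset.mem_map.mp hy
      exact ⟨⟨x, hx⟩, Subtype.ext hxy⟩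
  let e : {x // x ∈ t} ≃ {y // y ∈ T} := Equiv.ofBijective _ hbij
  rw [pMinor, ← Matrix.det_submatrix_equiv_self e
    (B.submatrix (fun i : {y // y ∈ T} => (i : Fin n)) fun j : {y // y ∈ T} => (j : Fin n))]
  rfl

lemma SSPaux_isP_add_smul_one {n : ℕ} {B : Matrix (Fin n) (Fin n) ℝ} (hB : IsP0 B) {ε : ℝ}
    (hε : 0 < ε) : IsP (B + ε • 1) := by
  intro S _
  have hsub : pMinor (B + ε • (1 : Matrix (Fin n) (Fin n) ℝ)) S
      = ((B.submatrix (fun i : {x // x ∈ S} => (i : Fin n)) fun j : {x // x ∈ S} => (j : Fin n))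
          + ε • (1 : Matrix {x // x ∈ S} {x // x ∈ S} ℝ)).det := by
    unfold pMinor
    congr 1
    ext i j
    by_cases hij : i = j
    · subst hij; simp
    · have h' : (i : Fin n) ≠ (j : Fin n) := fun h => hij (Subtype.ext h)
      simp [Matrix.one_apply_ne h', Matrix.one_apply_ne hij]
  rw [hsub, SSPaux_det_add_smul_one]
  apply Finset.sum_pos'
  · intro t _
    apply mul_nonneg (pow_nonneg hε.le _)
    rcases t.eq_empty_or_nonempty with rfl | ht
    · haveI : IsEmpty {x : {x // x ∈ S} // x ∈ (∅ : Finset {x // x ∈ S})} :=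
        ⟨fun x => absurd x.2 (Finset.notMem_empty _)⟩
      rw [Matrix.det_isEmpty]; exact zero_le_one
    · rw [SSPaux_submatrix_det_eq_pMinor]
      exact hB _ (Finset.Nonempty.map ht)
  · refine ⟨∅, Finset.mem_univ _, ?_⟩
    haveI : IsEmpty {x : {x // x ∈ S} // x ∈ (∅ : Finset {x // x ∈ S})} :=
      ⟨fun x => absurd x.2 (Finset.notMem_empty _)⟩
    rw [Matrix.det_isEmpty, mul_one]
    exact pow_pos hε _

/-- Any digraph that has sign symmetric P₀⁺-completion also has sign symmetric
P-completion. -/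
theorem hasSSP0plusCompletion_imp_hasSSPCompletion {n : ℕ}
    (D : Fin n → Fin n → Prop) (h : HasSSP0plusCompletion D) :
    HasSSPCompletion D := by
  classical
  intro A hA
  obtain ⟨htwin, hpos⟩ := hA
  have hev : ∀ S : Finset (Fin n), ∀ᶠ ε in 𝓝 (0:ℝ),
      ((S.Nonempty ∧ ∀ i ∈ S, ∀ j ∈ S, D i j) →
        0 ≤ pMinor (A - ε • (1 : Matrix (Fin n) (Fin n) ℝ)) S) := by
    intro S
    by_cases hS : S.Nonempty ∧ ∀ i ∈ S, ∀ j ∈ S, D i j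
    · have hc : Continuous fun ε : ℝ => pMinor (A - ε • (1 : Matrix (Fin n) (Fin n) ℝ)) S := by
        apply Continuous.matrix_det
        apply Continuous.matrix_submatrix
        exact continuous_const.sub (continuous_id.smul continuous_const)
      have h0 : (0:ℝ) < pMinor (A - (0:ℝ) • (1 : Matrix (Fin n) (Fin n) ℝ)) S := by
        simpa using hpos S hS.1 hS.2
      exact ((hc.tendsto 0).eventually (eventually_gt_nhds h0)).mono fun ε hε _ => hε.le
    · exact Filter.Eventually.of_forall fun ε h => absurd h hS
  have hall : ∀ᶠ ε in 𝓝 (0:ℝ), ∀ S : Finset (Fin n),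
      ((S.Nonempty ∧ ∀ i ∈ S, ∀ j ∈ S, D i j) →
        0 ≤ pMinor (A - ε • (1 : Matrix (Fin n) (Fin n) ℝ)) S) :=
    Filter.eventually_all.mpr hev
  have hsub' := hall.filter_mono (nhdsWithin_le_nhds (s := Set.Ioi (0:ℝ)))
  obtain ⟨ε, hεall, hεpos⟩ := (hsub'.and (eventually_mem_nhdsWithin)).exists
  replace hεpos : (0:ℝ) < ε := hεpos
  set A' := A - ε • (1 : Matrix (Fin n) (Fin n) ℝ) with hA'
  have hA'part : PartSSP0plus D A' := by
    constructor
    · intro i j hij hDij hDji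
      have e1 : A' i j = A i j := by simp [hA', Matrix.one_apply_ne hij]
      have e2 : A' j i = A j i := by simp [hA', Matrix.one_apply_ne (Ne.symm hij)]
      rw [e1, e2]; exact htwin i j hij hDij hDji
    · intro S hS hall'
      exact hεall S ⟨hS, hall'⟩
  obtain ⟨B, hcomp, hsym, hP0p⟩ := h A' hA'part
  have hB0 : IsP0 B := by
    intro S hS
    have hk := hP0p S.card (Finset.card_pos.mpr hS) (by simpa using Finset.card_le_univ S)
    exact hk.1 S rfl
  refine ⟨B + ε • 1, ?_, ?_, SSPaux_isP_add_smul_one hB0 hεpos⟩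
  · intro i j hD
    have hb := hcomp i j hD
    simp only [Matrix.add_apply, Matrix.smul_apply, hb, hA', Matrix.sub_apply, smul_eq_mul]
    ring
  · intro i j hij
    have e1 : (B + ε • (1 : Matrix (Fin n) (Fin n) ℝ)) i j = B i j := by
      simp [Matrix.one_apply_ne hij]
    have e2 : (B + ε • (1 : Matrix (Fin n) (Fin n) ℝ)) j i = B j i := by
      simp [Matrix.one_apply_ne (Ne.symm hij)]
    rw [e1, e2]; exact hsym i j hij


end SSP
end

section
/- The digraph D_1 on Fin 3 whose arcs are all six pairs (i,j) with i ≠ j together with the loops at vertices 1 and 2 (but with no loop at vertex 3) does not have sign symmetric P_{0,1}^+-completion. -/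
namespace SSP

/-- The digraph `D₁` on three vertices consisting of all six arcs between
distinct vertices together with loops at vertices 1 and 2 (no loop at
vertex 3). -/
def D1 : Fin 3 → Fin 3 → Prop := fun i j => i ≠ j ∨ (i = j ∧ i ≠ 2)

lemma pMinor_singleton {n : ℕ} (B : Matrix (Fin n) (Fin n) ℝ) (i : Fin n) :
    pMinor B {i} = B i i := by
  letI : Unique {x // x ∈ ({i} : Finset (Fin n))} :=
    ⟨⟨⟨i, Finset.mem_singleton_self i⟩⟩,
      fun x => Subtype.ext (Finset.mem_singleton.mp x.2)⟩
  rw [pMinor, Matrix.det_unique]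
  rfl

def pairEquiv {n : ℕ} (i j : Fin n) (h : i ≠ j) :
    Fin 2 ≃ {x // x ∈ ({i, j} : Finset (Fin n))} where
  toFun := fun k => if k = 0 then ⟨i, by simp⟩ else ⟨j, by simp⟩
  invFun := fun x => if x.1 = i then 0 else 1
  left_inv := by
    intro k
    fin_cases k <;> simp [h.symm]
  right_inv := by
    rintro ⟨x, hx⟩
    rcases Finset.mem_insert.mp hx with rfl | hx
    · simp
    · rw [Finset.mem_singleton] at hx
      subst hx
      simp [h.symm]

lemma pMinor_pair {n : ℕ} (B : Matrix (Fin n) (Fin n) ℝ) {i j : Fin n} (h : i ≠ j) :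
    pMinor B {i, j} = B i i * B j j - B i j * B j i := by
  have hd := Matrix.det_submatrix_equiv_self (pairEquiv i j h)
    (B.submatrix (fun i : {x // x ∈ ({i, j} : Finset (Fin n))} => (i : Fin n))
                 (fun j : {x // x ∈ ({i, j} : Finset (Fin n))} => (j : Fin n)))
  rw [pMinor, ← hd, Matrix.submatrix_submatrix, Matrix.det_fin_two]
  simp [pairEquiv, Function.comp]

lemma pMinor_univ {n : ℕ} (B : Matrix (Fin n) (Fin n) ℝ) :
    pMinor B Finset.univ = B.det := by
  rw [pMinor]
  exact Matrix.det_submatrix_equiv_self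
    (⟨fun x => x.1, fun x => ⟨x, Finset.mem_univ x⟩, fun _ => rfl, fun _ => rfl⟩ :
      {x // x ∈ (Finset.univ : Finset (Fin n))} ≃ Fin n) B

/-- The counterexample partial matrix: all entries specified except the
(2,2) entry (whose placeholder value 0 is irrelevant). -/
def Aex : Matrix (Fin 3) (Fin 3) ℝ := !![1, 1, 1; 1, 1, 2; 1, 2, 0]

/-- The digraph `D₁` does not have sign symmetric P₀₁⁺-completion. -/
theorem D1_not_hasSSP01plusCompletion : ¬ HasSSP01plusCompletion D1 := by
  intro h
  have hA : PartSSP01plus D1 Aex := by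
    refine ⟨?_, ?_, ?_⟩
    · intro i hi
      rcases hi with hi | ⟨_, hi⟩
      · exact absurd rfl hi
      · fin_cases i <;> first | exact absurd (by decide) hi | norm_num [Aex]
    · intro i j hij _ _
      left
      fin_cases i <;> fin_cases j <;> first | exact absurd rfl hij | norm_num [Aex]
    · intro S hS hspec
      have h2 : (2 : Fin 3) ∉ S := by
        intro h2
        have := hspec 2 h2 2 h2
        rcases this with h | ⟨_, h⟩ <;> exact h rfl
      by_cases h0 : (0 : Fin 3) ∈ S <;> by_cases h1 : (1 : Fin 3) ∈ S
      · have hSeq : S = {0, 1} := by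
          apply Finset.ext
          intro x
          fin_cases x <;> simp [h0, h1, h2]
        rw [hSeq, pMinor_pair _ (by decide : (0 : Fin 3) ≠ 1)]
        norm_num [Aex]
      · have hSeq : S = {0} := by
          apply Finset.ext
          intro x
          fin_cases x <;> simp [h0, h1, h2]
        rw [hSeq, pMinor_singleton]
        norm_num [Aex]
      · have hSeq : S = {1} := by
          apply Finset.ext
          intro x
          fin_cases x <;> simp [h0, h1, h2]
        rw [hSeq, pMinor_singleton]
        norm_num [Aex]
      · exfalso
        obtain ⟨x, hx⟩ := hS
        fin_cases x <;> [exact h0 hx; exact h1 hx; exact h2 hx]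
  obtain ⟨B, hC, _, hP, _⟩ := h Aex hA
  have hdet : B.det = -1 := by
    have e00 : B 0 0 = 1 := by have := hC 0 0 (Or.inr ⟨rfl, by decide⟩); simpa [Aex] using this
    have e01 : B 0 1 = 1 := by have := hC 0 1 (Or.inl (by decide)); simpa [Aex] using this
    have e02 : B 0 2 = 1 := by have := hC 0 2 (Or.inl (by decide)); simpa [Aex] using this
    have e10 : B 1 0 = 1 := by have := hC 1 0 (Or.inl (by decide)); simpa [Aex] using this
    have e11 : B 1 1 = 1 := by have := hC 1 1 (Or.inr ⟨rfl, by decide⟩); simpa [Aex] using this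
    have e12 : B 1 2 = 2 := by have := hC 1 2 (Or.inl (by decide)); simpa [Aex] using this
    have e20 : B 2 0 = 1 := by have := hC 2 0 (Or.inl (by decide)); simpa [Aex] using this
    have e21 : B 2 1 = 2 := by have := hC 2 1 (Or.inl (by decide)); simpa [Aex] using this
    rw [Matrix.det_fin_three, e00, e01, e02, e10, e11, e12, e20, e21]
    ring
  have h3 := (hP 3 (by norm_num) (by norm_num)).1 Finset.univ (by simp)
  rw [pMinor_univ, hdet] at h3
  linarith

end SSP
end

section
/- For every n ≥ 1 and every matrix M : Matrix (Fin n) (Fin n) ℝ, there exists t₀ : ℝ such that for all t ≥ t₀, the matrix B defined by B i i = t for all i and B i j = M i j for i ≠ j has every principal minor positive (every nonempty S ⊆ Fin n gives a positive determinant for the S×S principal submatrix of B). -/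
namespace SSP

open Polynomial Filter in
private lemma minor_eventually_pos {n : ℕ} (M : Matrix (Fin n) (Fin n) ℝ)
    (S : Finset (Fin n)) (hS : S.Nonempty) :
    ∀ᶠ t in atTop, 0 <
      pMinor (fun i j : Fin n => if i = j then t else M i j) S := by
  set N : Matrix {x // x ∈ S} {x // x ∈ S} ℝ :=
    fun i j => if (i : Fin n) = (j : Fin n) then 0 else -M i j with hN
  have key : ∀ t : ℝ,
      pMinor (fun i j : Fin n => if i = j then t else M i j) S
      = (Matrix.charpoly N).eval t := by
    intro t
    unfold pMinor
    rw [Matrix.charpoly, ← Polynomial.coe_evalRingHom, RingHom.map_det]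
    congr 1
    ext i j
    by_cases h : (i : Fin n) = (j : Fin n)
    · have : i = j := Subtype.ext h
      subst this
      simp only [Matrix.submatrix_apply, RingHom.mapMatrix_apply, Matrix.map_apply, if_pos rfl,
        Matrix.charmatrix_apply_eq]
      simp [hN, Matrix.submatrix]
    · have hij : i ≠ j := fun e => h (by rw [e])
      simp only [Matrix.submatrix_apply, RingHom.mapMatrix_apply, Matrix.map_apply, if_neg h,
        Matrix.charmatrix_apply_ne N _ _ hij]
      simp [hN, h, Matrix.submatrix, hij]
  have hdeg : 0 < (Matrix.charpoly N).degree := by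
    rw [Matrix.charpoly_degree_eq_dim]
    simp only [Fintype.card_coe]
    exact_mod_cast hS.card_pos
  have := (Matrix.charpoly N).tendsto_atTop_of_leadingCoeff_nonneg hdeg
    (by rw [(Matrix.charpoly_monic N).leadingCoeff]; norm_num)
  filter_upwards [this.eventually_gt_atTop 0] with t ht
  rw [key t]; exact ht

/-- Setting all diagonal entries to a sufficiently large `t` makes every
principal minor positive. -/
theorem large_diagonal_principal_minors_pos {n : ℕ} (hn : 1 ≤ n)
    (M : Matrix (Fin n) (Fin n) ℝ) :
    ∃ t₀ : ℝ, ∀ t : ℝ, t₀ ≤ t →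
      ∀ S : Finset (Fin n), S.Nonempty →
        0 < pMinor (fun i j => if i = j then t else M i j) S := by
  have H : ∀ᶠ t in Filter.atTop, ∀ S : Finset (Fin n), S.Nonempty →
      0 < pMinor (fun i j => if i = j then t else M i j) S := by
    rw [Filter.eventually_all]
    intro S
    rw [Filter.eventually_imp_distrib_left]
    intro hS
    exact minor_eventually_pos M S hS
  obtain ⟨t₀, ht₀⟩ := Filter.eventually_atTop.mp H
  exact ⟨t₀, ht₀⟩

end SSP
end

section
/- Let n ≥ 1, let E be a set of ordered pairs (i,j) of elements of Fin n with i ≠ j, and let a : E → ℝ be such that whenever (i,j) ∈ E and (j,i) ∈ E, either a(i,j)*a(j,i) > 0 or a(i,j) = a(j,i) = 0. Then there exists a matrix B : Matrix (Fin n) (Fin n) ℝ such that B i j = a(i,j) for every (i,j) ∈ E, B is sign symmetric, and every principal minor of B is positive (hence B is a sign symmetric P_{0,1}^+-matrix). -/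
namespace SSP

/-- Matrix form of the completion theorem for loopless digraphs: any
assignment of off-diagonal entries satisfying the twin condition extends to a
sign symmetric matrix all of whose principal minors are positive. -/
theorem offdiag_extends_to_sign_symmetric_P {n : ℕ} (hn : 1 ≤ n)
    (E : Set (Fin n × Fin n)) (hE : ∀ p ∈ E, p.1 ≠ p.2)
    (a : Fin n → Fin n → ℝ)
    (ha : ∀ i j : Fin n, (i, j) ∈ E → (j, i) ∈ E →
      (0 < a i j * a j i ∨ (a i j = 0 ∧ a j i = 0))) :
    ∃ B : Matrix (Fin n) (Fin n) ℝ,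
      (∀ i j : Fin n, (i, j) ∈ E → B i j = a i j) ∧ SignSym B ∧
      (∀ S : Finset (Fin n), S.Nonempty → 0 < pMinor B S) := by
  classical
  -- the off-diagonal fill
  set f : Fin n → Fin n → ℝ := fun i j =>
    if (i, j) ∈ E then a i j else if (j, i) ∈ E then a j i else 0 with hf
  set N : Matrix (Fin n) (Fin n) ℝ := fun i j => if i = j then 0 else f i j with hN
  -- candidate matrices parametrized by the diagonal value t
  set Bt : ℝ → Matrix (Fin n) (Fin n) ℝ := fun t => t • (1 : Matrix (Fin n) (Fin n) ℝ) + N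
    with hBt
  have hBoff : ∀ t, ∀ i j : Fin n, i ≠ j → Bt t i j = f i j := by
    intro t i j hij
    simp only [hBt, Matrix.add_apply, Matrix.smul_apply, Matrix.one_apply_ne hij, smul_zero,
      zero_add]
    simp [hN, hij]
  -- each principal minor of Bt t is the evaluation at t of a monic polynomial
  have key : ∀ S : Finset (Fin n), ∀ t : ℝ,
      pMinor (Bt t) S =
        Polynomial.eval t (Matrix.charpoly
          (-(N.submatrix (fun i : {x // x ∈ S} => (i : Fin n))
              (fun j : {x // x ∈ S} => (j : Fin n))))) := by
    intro S t
    have : Polynomial.eval t (Matrix.charpoly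
          (-(N.submatrix (fun i : {x // x ∈ S} => (i : Fin n))
              (fun j : {x // x ∈ S} => (j : Fin n))))) =
        Matrix.det ((Polynomial.evalRingHom t).mapMatrix
          (Matrix.charmatrix (-(N.submatrix (fun i : {x // x ∈ S} => (i : Fin n))
              (fun j : {x // x ∈ S} => (j : Fin n)))))) := by
      rw [Matrix.charpoly]
      exact RingHom.map_det (Polynomial.evalRingHom t) _
    rw [this]
    unfold pMinor
    congr 1
    ext i j
    by_cases h : i = j
    · subst h
      simp [Matrix.charmatrix_apply_eq, hBt, Matrix.add_apply, Matrix.smul_apply,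
        Matrix.one_apply]
    · have h' : (i : Fin n) ≠ (j : Fin n) := fun hc => h (Subtype.ext hc)
      simp [Matrix.charmatrix_apply_ne _ _ _ h, hBt, Matrix.add_apply, Matrix.smul_apply,
        Matrix.one_apply, h', Matrix.submatrix_apply]
  -- choose t making all minors positive at once
  have hev : ∀ᶠ t in Filter.atTop, ∀ S : Finset (Fin n),
      S.Nonempty → 0 < pMinor (Bt t) S := by
    rw [Filter.eventually_all]
    intro S
    by_cases hS : S.Nonempty
    · simp only [hS, forall_true_left]
      set M := -(N.submatrix (fun i : {x // x ∈ S} => (i : Fin n))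
          (fun j : {x // x ∈ S} => (j : Fin n))) with hM
      have hmono : M.charpoly.Monic := Matrix.charpoly_monic M
      have hcard : 0 < Fintype.card {x // x ∈ S} := by
        rw [Fintype.card_coe]; exact Finset.card_pos.mpr hS
      have hdeg : 0 < M.charpoly.degree := by
        rw [Matrix.charpoly_degree_eq_dim]
        exact_mod_cast hcard
      have htop : Filter.Tendsto (fun t => Polynomial.eval t M.charpoly)
          Filter.atTop Filter.atTop :=
        Polynomial.tendsto_atTop_of_leadingCoeff_nonneg _ hdeg (by
          rw [hmono.leadingCoeff]; norm_num)
      filter_upwards [htop.eventually_gt_atTop 0] with t ht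
      rw [key S t]; exact ht
    · filter_upwards with t h; exact absurd h hS
  obtain ⟨t, ht⟩ := hev.exists
  refine ⟨Bt t, ?_, ?_, ht⟩
  · intro i j hij
    have hne : i ≠ j := hE (i, j) hij
    rw [hBoff t i j hne, hf]
    simp [hij]
  · intro i j hij
    rw [hBoff t i j hij, hBoff t j i hij.symm, hf]
    by_cases h1 : (i, j) ∈ E <;> by_cases h2 : (j, i) ∈ E
    · simpa [h1, h2] using ha i j h1 h2
    · simp only [h1, h2, if_true, if_false]
      rcases eq_or_ne (a i j) 0 with h | h
      · exact Or.inr ⟨h, h⟩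
      · exact Or.inl (mul_self_pos.mpr h)
    · simp only [h1, h2, if_true, if_false]
      rcases eq_or_ne (a j i) 0 with h | h
      · exact Or.inr ⟨h, h⟩
      · exact Or.inl (mul_self_pos.mpr h)
    · simp [h1, h2]

end SSP
end

section
/- Let B : Matrix (Fin n) (Fin n) ℝ be a sign symmetric P_0-matrix and let i ≠ j be indices with B i i = 0 and B j j = 0. Then B i j = 0 and B j i = 0. -/
namespace SSP

/-- In a sign symmetric P₀-matrix, twin entries over two zero diagonal
entries must vanish. -/
theorem zero_diag_forces_zero_twins {n : ℕ} (B : Matrix (Fin n) (Fin n) ℝ)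
    (hss : SignSym B) (hP0 : IsP0 B) (i j : Fin n) (hij : i ≠ j)
    (hii : B i i = 0) (hjj : B j j = 0) :
    B i j = 0 ∧ B j i = 0 := by
  have hiS : i ∈ ({i, j} : Finset (Fin n)) := by simp
  have hjS : j ∈ ({i, j} : Finset (Fin n)) := by simp
  have hpm := hP0 {i, j} ⟨i, hiS⟩
  let e : Fin 2 ≃ {x // x ∈ ({i, j} : Finset (Fin n))} :=
    { toFun := fun k => if k = 0 then ⟨i, hiS⟩ else ⟨j, hjS⟩
      invFun := fun x => if (x : Fin n) = i then 0 else 1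
      left_inv := by
        intro k
        fin_cases k <;> simp [hij.symm]
      right_inv := by
        rintro ⟨x, hx⟩
        simp only [Finset.mem_insert, Finset.mem_singleton] at hx
        rcases hx with rfl | rfl
        · simp
        · simp [hij.symm] }
  have hdet : pMinor B {i, j} = B i i * B j j - B i j * B j i := by
    unfold pMinor
    rw [← Matrix.det_submatrix_equiv_self e]
    rw [Matrix.det_fin_two]
    have h0 : ((e 0 : {x // x ∈ ({i, j} : Finset (Fin n))}) : Fin n) = i := rfl
    have h1 : ((e 1 : {x // x ∈ ({i, j} : Finset (Fin n))}) : Fin n) = j := rfl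
    simp [Matrix.submatrix_apply, h0, h1]
  rw [hdet, hii, hjj] at hpm
  have hle : B i j * B j i ≤ 0 := by linarith
  rcases hss i j hij with h | h
  · linarith
  · exact h

end SSP
end

section
/- Every sign symmetric P_0-matrix B : Matrix (Fin n) (Fin n) ℝ all of whose diagonal entries are zero is the zero matrix. -/
namespace SSP

/-- A sign symmetric P₀-matrix with zero diagonal is the zero matrix. -/
theorem zero_diag_sign_symmetric_P0_eq_zero {n : ℕ}
    (B : Matrix (Fin n) (Fin n) ℝ) (hss : SignSym B) (hP0 : IsP0 B)
    (hdiag : ∀ i : Fin n, B i i = 0) :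
    B = 0 := by
  ext i j
  simp only [Matrix.zero_apply]
  rcases eq_or_ne i j with rfl | hij
  · exact hdiag i
  -- consider the 2x2 principal minor on {i, j}
  have hminor : pMinor B {i, j} = B i i * B j j - B i j * B j i := by
    have hiS : i ∈ ({i, j} : Finset (Fin n)) := by simp
    have hjS : j ∈ ({i, j} : Finset (Fin n)) := by simp
    let e : Fin 2 ≃ {x // x ∈ ({i, j} : Finset (Fin n))} :=
      { toFun := ![⟨i, hiS⟩, ⟨j, hjS⟩]
        invFun := fun x => if (x : Fin n) = i then 0 else 1
        left_inv := by
          intro k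
          fin_cases k <;> simp [hij.symm]
        right_inv := by
          rintro ⟨x, hx⟩
          simp only [Finset.mem_insert, Finset.mem_singleton] at hx
          rcases hx with rfl | rfl <;> simp [hij.symm] }
    have := Matrix.det_submatrix_equiv_self e
      (B.submatrix (fun i : {x // x ∈ ({i, j} : Finset (Fin n))} => (i : Fin n))
                   (fun j : {x // x ∈ ({i, j} : Finset (Fin n))} => (j : Fin n)))
    rw [pMinor, ← this, Matrix.det_fin_two]
    simp [e, Matrix.submatrix_apply]
  have h2 := hP0 {i, j} ⟨i, by simp⟩
  rw [hminor, hdiag i, hdiag j] at h2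
  have hle : B i j * B j i ≤ 0 := by linarith
  rcases hss i j hij with hpos | ⟨h1, _⟩
  · linarith
  · exact h1

end SSP
end
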